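/- Let L', M, K be positive integers and Q = ∑_{i=0}^{2K} binom(L', i). If MQ ≤ 2^{L'}, then the number of M-element subsets of {0,1}^{L'} that contain the all-ones string and have pairwise Hamming distance at least 2K+1 is at least (∏_{i=1}^{M−1}(2^{L'} − iQ)) / (M−1)!. -/

import Mathlib

open Finset

namespace Stmt19

def good {L : ℕ} (v₀ : Fin L → Bool) (d n : ℕ) : Finset (Fin n → (Fin L → Bool)) :=
  Finset.univ.filter (fun f => (∀ i, d ≤ hammingDist v₀ (f i)) ∧
    ∀ i j, i ≠ j → d ≤ hammingDist (f i) (f j))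

lemma card_ball_le {L : ℕ} (v : Fin L → Bool) (r : ℕ) :
    (Finset.univ.filter fun w : Fin L → Bool => hammingDist v w ≤ r).card
      ≤ ∑ i ∈ Finset.range (r + 1), L.choose i := by
  classical
  have hcard : ((Finset.range (r+1)).biUnion
      (fun i => Finset.powersetCard i (Finset.univ : Finset (Fin L)))).card
      = ∑ i ∈ Finset.range (r+1), L.choose i := by
    rw [Finset.card_biUnion]
    · simp [Finset.card_powersetCard]
    · intro i hi j hj hij
      apply Finset.disjoint_left.2
      intro A hA hA'
      rw [Finset.mem_powersetCard] at hA hA'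
      exact hij (hA.2 ▸ hA'.2 ▸ rfl)
  rw [← hcard]
  apply Finset.card_le_card_of_injOn (fun w => Finset.univ.filter (fun j => v j ≠ w j))
  · intro w hw
    simp only [Finset.mem_coe, Finset.mem_filter, Finset.mem_univ, true_and] at hw
    rw [Finset.mem_coe, Finset.mem_biUnion]
    refine ⟨hammingDist v w, ?_, ?_⟩
    · simpa [Nat.lt_succ_iff] using hw
    · rw [Finset.mem_powersetCard]
      exact ⟨Finset.subset_univ _, rfl⟩
  · intro w1 _ w2 _ hEq
    funext j
    simp only at hEq
    have h : (v j ≠ w1 j) ↔ (v j ≠ w2 j) := by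
      have := Finset.ext_iff.1 hEq j
      simpa using this
    revert h
    cases v j <;> cases w1 j <;> cases w2 j <;> simp

lemma card_far_ge {L : ℕ} (r : ℕ) (P : Finset (Fin L → Bool)) :
    2 ^ L - P.card * (∑ i ∈ Finset.range (r + 1), L.choose i)
      ≤ (Finset.univ.filter fun w : Fin L → Bool => ∀ p ∈ P, r + 1 ≤ hammingDist p w).card := by
  classical
  set Q := ∑ i ∈ Finset.range (r + 1), L.choose i
  have hnear : (Finset.univ.filter fun w : Fin L → Bool =>
      ¬ ∀ p ∈ P, r + 1 ≤ hammingDist p w).card ≤ P.card * Q := by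
    have hsub : (Finset.univ.filter fun w : Fin L → Bool =>
        ¬ ∀ p ∈ P, r + 1 ≤ hammingDist p w)
        ⊆ P.biUnion (fun p => Finset.univ.filter fun w => hammingDist p w ≤ r) := by
      intro w hw
      simp only [Finset.mem_filter, Finset.mem_univ, true_and, not_forall, not_le,
        Nat.lt_succ_iff] at hw
      obtain ⟨p, hp, hd⟩ := hw
      exact Finset.mem_biUnion.2 ⟨p, hp, Finset.mem_filter.2 ⟨Finset.mem_univ _, hd⟩⟩
    calc _ ≤ _ := Finset.card_le_card hsub
      _ ≤ ∑ p ∈ P, (Finset.univ.filter fun w => hammingDist p w ≤ r).card :=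
          Finset.card_biUnion_le
      _ ≤ ∑ _p ∈ P, Q := Finset.sum_le_sum fun p _ => card_ball_le p r
      _ = P.card * Q := by rw [Finset.sum_const, smul_eq_mul]
  have htot : (Finset.univ.filter fun w : Fin L → Bool => ∀ p ∈ P, r + 1 ≤ hammingDist p w).card
      + (Finset.univ.filter fun w : Fin L → Bool => ¬ ∀ p ∈ P, r + 1 ≤ hammingDist p w).card
      = 2 ^ L := by
    rw [Finset.card_filter_add_card_filter_not, Finset.card_univ]
    simp [Fintype.card_fun]
  omega

lemma step {L : ℕ} (v₀ : Fin L → Bool) (r n : ℕ) :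
    (good v₀ (r+1) n).card * (2 ^ L - (n+1) * (∑ i ∈ Finset.range (r + 1), L.choose i))
      ≤ (good v₀ (r+1) (n+1)).card := by
  classical
  set Q := ∑ i ∈ Finset.range (r + 1), L.choose i with hQdef
  have hmap : ∀ f ∈ good v₀ (r+1) (n+1), Fin.init f ∈ good v₀ (r+1) n := by
    intro f hf
    simp only [good, Finset.mem_filter, Finset.mem_univ, true_and] at hf ⊢
    refine ⟨fun i => hf.1 _, fun i j hij => hf.2 _ _ ?_⟩
    simpa [Fin.castSucc_inj] using hij
  rw [Finset.card_eq_sum_card_fiberwise hmap]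
  have hfiber : ∀ g ∈ good v₀ (r+1) n,
      2 ^ L - (n+1) * Q ≤ ((good v₀ (r+1) (n+1)).filter fun f => Fin.init f = g).card := by
    intro g hg
    simp only [good, Finset.mem_filter, Finset.mem_univ, true_and] at hg
    set P : Finset (Fin L → Bool) := insert v₀ (Finset.univ.image g) with hPdef
    have hPcard : P.card ≤ n + 1 := by
      calc P.card ≤ (Finset.univ.image g).card + 1 := Finset.card_insert_le _ _
        _ ≤ n + 1 := by
          have := Finset.card_image_le (s := (Finset.univ : Finset (Fin n))) (f := g)
          simp only [Finset.card_univ, Fintype.card_fin] at this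
          omega
    refine le_trans ?_ (le_trans (card_far_ge r P) ?_)
    · exact Nat.sub_le_sub_left (Nat.mul_le_mul_right Q hPcard) _
    · apply Finset.card_le_card_of_injOn (fun w => (Fin.snoc g w : Fin (n+1) → (Fin L → Bool)))
      · intro w hw
        simp only [Finset.mem_coe, Finset.mem_filter, Finset.mem_univ, true_and] at hw
        have hwv₀ : r + 1 ≤ hammingDist v₀ w := hw v₀ (Finset.mem_insert_self _ _)
        have hwg : ∀ i, r + 1 ≤ hammingDist (g i) w := fun i =>
          hw (g i) (Finset.mem_insert_of_mem (Finset.mem_image_of_mem g (Finset.mem_univ i)))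
        simp only [Finset.mem_coe, good, Finset.mem_filter, Finset.mem_univ, true_and]
        refine ⟨⟨fun i => ?_, fun i j hij => ?_⟩, Fin.init_snoc _ _⟩
        · induction i using Fin.lastCases with
          | last => simpa using hwv₀
          | cast i => simpa using hg.1 i
        · induction i using Fin.lastCases with
          | last =>
            induction j using Fin.lastCases with
            | last => exact absurd rfl hij
            | cast j => simpa [hammingDist_comm] using hwg j
          | cast i =>
            induction j using Fin.lastCases with
            | last => simpa using hwg i
            | cast j =>
              have : i ≠ j := fun h => hij (by rw [h])
              simpa using hg.2 i j this
      · intro w1 _ w2 _ hEq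
        have := congrFun hEq (Fin.last n)
        simpa using this
  calc (good v₀ (r+1) n).card * (2 ^ L - (n+1) * Q)
      = ∑ _g ∈ good v₀ (r+1) n, (2 ^ L - (n+1) * Q) := by rw [Finset.sum_const, smul_eq_mul]
    _ ≤ _ := Finset.sum_le_sum hfiber

lemma prod_le_card_good {L : ℕ} (v₀ : Fin L → Bool) (r n : ℕ) :
    ∏ i ∈ Finset.Icc 1 n, (2 ^ L - i * (∑ i ∈ Finset.range (r + 1), L.choose i))
      ≤ (good v₀ (r+1) n).card := by
  induction n with
  | zero =>
    simp only [Finset.Icc_self, show Finset.Icc 1 0 = ∅ from rfl, Finset.prod_empty]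
    rw [Nat.one_le_iff_ne_zero, ← Nat.pos_iff_ne_zero, Finset.card_pos]
    exact ⟨fun i => i.elim0, by
      simp only [good, Finset.mem_filter, Finset.mem_univ, true_and]
      exact ⟨fun i => i.elim0, fun i => i.elim0⟩⟩
  | succ n ih =>
    rw [Finset.prod_Icc_succ_top (Nat.le_add_left 1 n)]
    exact le_trans (Nat.mul_le_mul_right _ ih) (step v₀ r n)

lemma card_good_le {L : ℕ} (v₀ : Fin L → Bool) (r m : ℕ) :
    (good v₀ (r+1) m).card ≤ m.factorial *
      (Finset.univ.filter (fun S : Finset (Fin L → Bool) => S.card = m + 1 ∧ v₀ ∈ S ∧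
        ∀ a ∈ S, ∀ b ∈ S, a ≠ b → r + 1 ≤ hammingDist a b)).card := by
  classical
  have hinj : ∀ f ∈ good v₀ (r+1) m, Function.Injective f := by
    intro f hf
    simp only [good, Finset.mem_filter] at hf
    intro i j hij
    by_contra h
    have := hf.2.2 i j h
    rw [hij, hammingDist_self] at this
    omega
  have hne : ∀ f ∈ good v₀ (r+1) m, ∀ i, f i ≠ v₀ := by
    intro f hf i h
    simp only [good, Finset.mem_filter] at hf
    have := hf.2.1 i
    rw [h, hammingDist_self] at this
    omega
  apply Finset.card_le_mul_card_image_of_maps_to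
    (f := fun f => insert v₀ (Finset.univ.image f))
  · -- maps to
    intro f hf
    have hinjf := hinj f hf
    have hnef := hne f hf
    simp only [good, Finset.mem_filter, Finset.mem_univ, true_and] at hf
    simp only [Finset.mem_filter, Finset.mem_univ, true_and]
    refine ⟨?_, Finset.mem_insert_self _ _, ?_⟩
    · rw [Finset.card_insert_of_notMem, Finset.card_image_of_injective _ hinjf]
      · simp
      · intro h
        obtain ⟨i, _, hi⟩ := Finset.mem_image.1 h
        exact hnef i hi
    · intro a ha b hb hab
      rcases Finset.mem_insert.1 ha with ha | ha <;>
        rcases Finset.mem_insert.1 hb with hb | hb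
      · exact absurd (ha.trans hb.symm) hab
      · obtain ⟨j, _, hj⟩ := Finset.mem_image.1 hb
        subst ha; subst hj; exact hf.1 j
      · obtain ⟨i, _, hi⟩ := Finset.mem_image.1 ha
        subst hb; subst hi
        rw [hammingDist_comm]; exact hf.1 i
      · obtain ⟨i, _, hi⟩ := Finset.mem_image.1 ha
        obtain ⟨j, _, hj⟩ := Finset.mem_image.1 hb
        subst hi; subst hj
        exact hf.2 i j (fun h => hab (by rw [h]))
  · -- fibers
    intro S hS
    simp only [Finset.mem_filter, Finset.mem_univ, true_and] at hS
    have hTcard : Fintype.card {x // x ∈ S.erase v₀} = m := by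
      rw [Fintype.card_coe, Finset.card_erase_of_mem hS.2.1, hS.1]; omega
    have hsub : ((good v₀ (r+1) m).filter fun f => insert v₀ (Finset.univ.image f) = S)
        ⊆ (Finset.univ : Finset (Fin m ↪ {x // x ∈ S.erase v₀})).image
            (fun e => (fun i => (e i : Fin L → Bool))) := by
      intro f hf
      rw [Finset.mem_filter] at hf
      obtain ⟨hfg, hfS⟩ := hf
      have hmem : ∀ i, f i ∈ S.erase v₀ := by
        intro i
        apply Finset.mem_erase.2
        refine ⟨hne f hfg i, ?_⟩
        rw [← hfS]
        exact Finset.mem_insert_of_mem (Finset.mem_image_of_mem f (Finset.mem_univ i))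
      refine Finset.mem_image.2 ⟨⟨fun i => ⟨f i, hmem i⟩, ?_⟩, Finset.mem_univ _, rfl⟩
      intro i j h
      exact hinj f hfg (congrArg Subtype.val h)
    calc _ ≤ _ := Finset.card_le_card hsub
      _ ≤ (Finset.univ : Finset (Fin m ↪ {x // x ∈ S.erase v₀})).card :=
          Finset.card_image_le
      _ = m.factorial := by
          rw [Finset.card_univ, Fintype.card_embedding_eq, hTcard, Fintype.card_fin,
            Nat.descFactorial_self]

end Stmt19

theorem stmt_19 (L' M K : ℕ) (hL : 0 < L') (hM : 0 < M) (hK : 0 < K)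
    (hQ : M * (∑ i ∈ Finset.range (2 * K + 1), L'.choose i) ≤ 2 ^ L') :
    (∏ i ∈ Finset.Icc 1 (M - 1),
        ((2 ^ L' : ℝ) - (i : ℝ) * (∑ i ∈ Finset.range (2 * K + 1), L'.choose i : ℕ)))
      / ((M - 1).factorial : ℝ)
    ≤ (({S : Finset (Fin L' → Bool) | S.card = M ∧ (fun _ => true) ∈ S ∧
          ∀ a ∈ S, ∀ b ∈ S, a ≠ b → 2 * K + 1 ≤ hammingDist a b}).ncard : ℝ) := by
  classical
  set Q := ∑ i ∈ Finset.range (2 * K + 1), L'.choose i with hQdef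
  set m := M - 1 with hmdef
  have hMm : M = m + 1 := by omega
  set v₀ : Fin L' → Bool := fun _ => true with hv₀
  set F : Finset (Finset (Fin L' → Bool)) :=
    Finset.univ.filter (fun S : Finset (Fin L' → Bool) => S.card = m + 1 ∧ v₀ ∈ S ∧
      ∀ a ∈ S, ∀ b ∈ S, a ≠ b → 2 * K + 1 ≤ hammingDist a b) with hF
  have hsetF : {S : Finset (Fin L' → Bool) | S.card = M ∧ (fun _ => true) ∈ S ∧
      ∀ a ∈ S, ∀ b ∈ S, a ≠ b → 2 * K + 1 ≤ hammingDist a b} = ↑F := by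
    ext S
    simp [hF, hMm, hv₀]
  rw [hsetF, Set.ncard_coe_finset]
  have hr : 2 * K + 1 = (2 * K) + 1 := rfl
  have hnat : ∏ i ∈ Finset.Icc 1 m, (2 ^ L' - i * Q) ≤ m.factorial * F.card := by
    calc ∏ i ∈ Finset.Icc 1 m, (2 ^ L' - i * Q)
        ≤ (Stmt19.good v₀ (2 * K + 1) m).card := Stmt19.prod_le_card_good v₀ (2 * K) m
      _ ≤ m.factorial * F.card := Stmt19.card_good_le v₀ (2 * K) m
  have hfactpos : (0 : ℝ) < ((M - 1).factorial : ℝ) := by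
    exact_mod_cast Nat.factorial_pos _
  rw [div_le_iff₀ hfactpos]
  have hcast : (∏ i ∈ Finset.Icc 1 (M - 1), ((2 ^ L' : ℝ) - (i : ℝ) * (Q : ℕ)))
      = ((∏ i ∈ Finset.Icc 1 m, (2 ^ L' - i * Q) : ℕ) : ℝ) := by
    rw [Nat.cast_prod, ← hmdef]
    apply Finset.prod_congr rfl
    intro i hi
    rw [Finset.mem_Icc] at hi
    have hle : i * Q ≤ 2 ^ L' := by
      calc i * Q ≤ M * Q := Nat.mul_le_mul_right Q (by omega)
        _ ≤ 2 ^ L' := hQ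
    rw [Nat.cast_sub hle]
    push_cast
    ring
  rw [hcast]
  have : ((∏ i ∈ Finset.Icc 1 m, (2 ^ L' - i * Q) : ℕ) : ℝ)
      ≤ ((m.factorial * F.card : ℕ) : ℝ) := by exact_mod_cast hnat
  calc ((∏ i ∈ Finset.Icc 1 m, (2 ^ L' - i * Q) : ℕ) : ℝ)
      ≤ ((m.factorial * F.card : ℕ) : ℝ) := this
    _ = (F.card : ℝ) * ((M - 1).factorial : ℝ) := by
        rw [← hmdef]; push_cast; ring
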